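/- If an indecomposable generalized Cartan matrix K is of finite type, i.e. there exists u : Fin n → ℝ with u i > 0 for all i and (K ·ᵥ u) i > 0 for all i, then det K > 0. -/

import Mathlib

/-- `K` is an `n × n` generalized Cartan matrix. -/

theorem zmat_det_pos : ∀ (n : ℕ) (M : Matrix (Fin n) (Fin n) ℝ) (u : Fin n → ℝ),
    (∀ i j, i ≠ j → M i j ≤ 0) → (∀ i, 0 < u i) → (∀ i, 0 < M.mulVec u i) →
    0 < M.det := by
  intro n
  induction n with
  | zero => intro M u _ _ _; simp [Matrix.det_fin_zero]
  | succ n ih =>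
    intro M u hZ hu hMu
    set a := M 0 0 with ha_def
    have hsum : ∑ j ∈ Finset.univ.erase 0, M 0 j * u j ≤ 0 := by
      apply Finset.sum_nonpos
      intro j hj
      have hj0 : j ≠ 0 := (Finset.mem_erase.mp hj).1
      exact mul_nonpos_of_nonpos_of_nonneg (hZ 0 j (Ne.symm hj0)) (hu j).le
    have hMu0 : M.mulVec u 0 = a * u 0 + ∑ j ∈ Finset.univ.erase 0, M 0 j * u j := by
      rw [Matrix.mulVec, dotProduct,
        ← Finset.add_sum_erase _ _ (Finset.mem_univ (0 : Fin (n+1)))]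
    have hau : 0 < a * u 0 := by have := hMu 0; rw [hMu0] at this; linarith
    have ha : 0 < a := by by_contra h; push_neg at h; nlinarith [hu 0]
    have ha' : a ≠ 0 := ne_of_gt ha
    -- elimination matrix U
    set U : Matrix (Fin (n+1)) (Fin (n+1)) ℝ :=
      fun i j => if i = j then 1 else if i = 0 then -(M 0 j) / a else 0 with hU_def
    have hUtri : U.BlockTriangular id := by
      intro i j hij
      simp only [id] at hij
      have h1 : i ≠ j := ne_of_gt hij
      have h2 : i ≠ 0 := by
        rintro rfl; simp at hij
      simp [hU_def, h1, h2]
    have hUdet : U.det = 1 := by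
      rw [Matrix.det_of_upperTriangular hUtri]
      simp [hU_def]
    set M' : Matrix (Fin (n+1)) (Fin (n+1)) ℝ :=
      fun i j => if j = 0 then M i 0 else M i j - M i 0 * M 0 j / a with hM'_def
    have hMU : M * U = M' := by
      funext i j
      rw [Matrix.mul_apply]
      by_cases hj : j = 0
      · subst hj
        have : ∀ k : Fin (n+1), M i k * U k 0 = if k = 0 then M i 0 else 0 := by
          intro k
          by_cases hk : k = 0
          · subst hk; simp [hU_def]
          · simp [hU_def, hk]
        simp only [this, Finset.sum_ite_eq', Finset.mem_univ, if_true, hM'_def]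
      · have : ∀ k : Fin (n+1), M i k * U k j =
            (if k = j then M i j else 0) + (if k = 0 then M i 0 * (-(M 0 j) / a) else 0) := by
          intro k
          by_cases hk : k = j
          · subst hk; simp [hU_def, hj]
          · by_cases hk0 : k = 0
            · subst hk0; simp [hU_def, hk, Ne.symm hj]
            · simp [hU_def, hk, hk0]
        rw [Finset.sum_congr rfl (fun k _ => this k), Finset.sum_add_distrib]
        simp [hM'_def, hj]
        ring
    have hdetM' : M'.det = M.det := by
      rw [← hMU, Matrix.det_mul, hUdet, mul_one]
    -- Schur complement
    set S : Matrix (Fin n) (Fin n) ℝ :=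
      fun i j => M i.succ j.succ - M i.succ 0 * M 0 j.succ / a with hS_def
    have hsub : M'.submatrix Fin.succ Fin.succ = S := by
      funext i j
      rw [Matrix.submatrix_apply]
      simp [hM'_def, hS_def, Matrix.submatrix_apply, Fin.succ_ne_zero]
    have hrow0 : ∀ j : Fin (n+1), j ≠ 0 → M' 0 j = 0 := by
      intro j hj
      simp only [hM'_def, if_neg hj, ← ha_def]
      field_simp
      ring
    have hdet_split : M'.det = a * S.det := by
      rw [Matrix.det_succ_row_zero]
      rw [Finset.sum_eq_single 0]
      · simp only [Fin.val_zero, pow_zero, one_mul, Fin.succAbove_zero, hsub]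
        simp [hM'_def]
        exact Or.inl ha_def.symm
      · intro j _ hj
        rw [hrow0 j hj]; ring
      · intro h; exact absurd (Finset.mem_univ _) h
    -- hypotheses for S
    set u' : Fin n → ℝ := fun j => u j.succ with hu'_def
    have hSZ : ∀ i j, i ≠ j → S i j ≤ 0 := by
      intro i j hij
      have h1 : M i.succ j.succ ≤ 0 := hZ _ _ (fun h => hij (Fin.succ_injective _ h))
      have h2 : M i.succ 0 ≤ 0 := hZ _ _ (Fin.succ_ne_zero i)
      have h3 : M 0 j.succ ≤ 0 := hZ _ _ (Ne.symm (Fin.succ_ne_zero j))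
      have hp : 0 ≤ M i.succ 0 * M 0 j.succ := by nlinarith
      have : 0 ≤ M i.succ 0 * M 0 j.succ / a := div_nonneg hp ha.le
      simp only [hS_def]
      linarith
    have hkey : ∀ i, S.mulVec u' i = M.mulVec u i.succ - M i.succ 0 / a * M.mulVec u 0 := by
      intro i
      simp only [Matrix.mulVec, dotProduct, hS_def, hu'_def]
      rw [Fin.sum_univ_succ (f := fun k => M i.succ k * u k),
        Fin.sum_univ_succ (f := fun k => M 0 k * u k)]
      rw [Finset.sum_congr rfl (fun j _ => by
        show (M i.succ j.succ - M i.succ 0 * M 0 j.succ / a) * u j.succ =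
          M i.succ j.succ * u j.succ - M i.succ 0 / a * (M 0 j.succ * u j.succ)
        ring)]
      rw [Finset.sum_sub_distrib, ← Finset.mul_sum]
      rw [← ha_def]
      field_simp
      ring
    have hSu : ∀ i, 0 < S.mulVec u' i := by
      intro i
      rw [hkey i]
      have h2 : M i.succ 0 ≤ 0 := hZ _ _ (Fin.succ_ne_zero i)
      have : M i.succ 0 / a ≤ 0 := div_nonpos_of_nonpos_of_nonneg h2 ha.le
      have hm0 := hMu 0
      have hmi := hMu i.succ
      nlinarith
    have hSdet : 0 < S.det := ih S u' hSZ (fun i => hu _) hSu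
    calc (0:ℝ) < a * S.det := mul_pos ha hSdet
    _ = M'.det := hdet_split.symm
    _ = M.det := hdetM'

def IsGCM {n : ℕ} (K : Matrix (Fin n) (Fin n) ℤ) : Prop :=
  (∀ i, K i i = 2) ∧ (∀ i j, i ≠ j → K i j ≤ 0) ∧ (∀ i j, i ≠ j → K i j = 0 → K j i = 0)

/-- `K` is indecomposable: there is no partition of `Fin n` into two nonempty disjoint
subsets `S`, `T` with `K i j = 0` for all `i ∈ S`, `j ∈ T`. -/
def Indecomposable {n : ℕ} (K : Matrix (Fin n) (Fin n) ℤ) : Prop :=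
  ¬ ∃ S T : Finset (Fin n), S.Nonempty ∧ T.Nonempty ∧ Disjoint S T ∧ S ∪ T = Finset.univ ∧
      ∀ i ∈ S, ∀ j ∈ T, K i j = 0

/-- `K` with entries viewed in `ℝ`. -/
def KR {n : ℕ} (K : Matrix (Fin n) (Fin n) ℤ) : Matrix (Fin n) (Fin n) ℝ :=
  K.map (Int.cast : ℤ → ℝ)

/-- If an indecomposable generalized Cartan matrix is of finite type (there is a positive
vector `u` with `K ·ᵥ u` entrywise positive), then `det K > 0`. -/
theorem finiteType_det_pos {n : ℕ} (hn : 1 ≤ n) (K : Matrix (Fin n) (Fin n) ℤ)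
    (hGCM : IsGCM K) (hInd : Indecomposable K)
    (hfin : ∃ u : Fin n → ℝ, (∀ i, 0 < u i) ∧ ∀ i, 0 < (KR K).mulVec u i) :
    0 < K.det := by
  obtain ⟨u, hu, hMu⟩ := hfin
  have hZ : ∀ i j, i ≠ j → (KR K) i j ≤ 0 := by
    intro i j hij
    have := hGCM.2.1 i j hij
    simp only [KR, Matrix.map_apply]
    exact_mod_cast this
  have h := zmat_det_pos n (KR K) u hZ hu hMu
  have hcast : (KR K).det = ((K.det : ℤ) : ℝ) := by
    have h2 := RingHom.map_det (Int.castRingHom ℝ) K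
    simp only [RingHom.mapMatrix_apply] at h2
    rw [KR]
    simpa using h2.symm
  rw [hcast] at h
  exact_mod_cast h
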